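/- (Expansion of the rescaled angular momentum, equation (6.29).) Let v_c ∈ ℝ and let η: ℝ → ℝ be a continuous 2π-periodic function with ∫₀^{2π} η(θ) dθ = ∫₀^{2π} η(θ)cos(2θ) dθ = ∫₀^{2π} η(θ)sin(2θ) dθ = 0. Then 𝒥( v_c·𝚌₂ + η ) = v_c·( 1 + (1/π)·∫₀^{2π} η(θ)cos(4θ) dθ ) + α·v_c² + ℵ·∫₀^{2π} η(θ)²·g_γ(θ) dθ, where α := (γ²+1)√2/((γ²−1)√π). -/

import Mathlib

open Real MeasureTheory

/-- `g_γ(θ) := γ cos²θ + γ⁻¹ sin²θ`. -/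
noncomputable def gell (γ θ : ℝ) : ℝ := γ * Real.cos θ ^ 2 + γ⁻¹ * Real.sin θ ^ 2

/-- `ℵ := √2/(√π (γ − γ⁻¹))`. -/
noncomputable def aleph (γ : ℝ) : ℝ := Real.sqrt 2 / (Real.sqrt π * (γ - γ⁻¹))

/-- The rescaled angular momentum
`𝒥(ξ) := ℵ ∫₀^{2π} ξ g_γ dθ + ℵ ∫₀^{2π} ξ² g_γ dθ`. -/
noncomputable def Jcal (γ : ℝ) (ξ : ℝ → ℝ) : ℝ :=
  aleph γ * (∫ θ in (0:ℝ)..(2 * π), ξ θ * gell γ θ) +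
    aleph γ * (∫ θ in (0:ℝ)..(2 * π), (ξ θ) ^ 2 * gell γ θ)

/-- `𝚌₂(θ) := √(2/π) cos(2θ)`. -/
noncomputable def c2fun (θ : ℝ) : ℝ := Real.sqrt (2 / π) * Real.cos (2 * θ)

lemma integral_cos_nat_mul (n : ℕ) (hn : n ≠ 0) :
    (∫ θ in (0:ℝ)..(2 * π), Real.cos (n * θ)) = 0 := by
  have hn' : (n : ℝ) ≠ 0 := Nat.cast_ne_zero.mpr hn
  rw [intervalIntegral.integral_comp_mul_left Real.cos hn']
  have h2 : (n : ℝ) * (2 * π) = (2 * n : ℕ) * π := by push_cast; ring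
  simp only [mul_zero, integral_cos, Real.sin_zero, sub_zero, smul_eq_mul, h2,
    Real.sin_nat_mul_pi, mul_zero]

/-- Expansion of the rescaled angular momentum (equation (6.29));
`α := (γ²+1)√2/((γ²−1)√π)`. -/
theorem angular_momentum_expansion
    (γ : ℝ) (hγ : 1 < γ) (vc : ℝ)
    (η : ℝ → ℝ) (hcont : Continuous η) (hper : ∀ θ, η (θ + 2 * π) = η θ)
    (h0 : (∫ θ in (0:ℝ)..(2 * π), η θ) = 0)
    (hc2 : (∫ θ in (0:ℝ)..(2 * π), η θ * Real.cos (2 * θ)) = 0)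
    (hs2 : (∫ θ in (0:ℝ)..(2 * π), η θ * Real.sin (2 * θ)) = 0) :
    Jcal γ (fun θ => vc * c2fun θ + η θ)
      = vc * (1 + (1 / π) * ∫ θ in (0:ℝ)..(2 * π), η θ * Real.cos (4 * θ)) +
          ((γ ^ 2 + 1) * Real.sqrt 2 / ((γ ^ 2 - 1) * Real.sqrt π)) * vc ^ 2 +
          aleph γ * ∫ θ in (0:ℝ)..(2 * π), (η θ) ^ 2 * gell γ θ := by
  have hπ : (0:ℝ) < π := Real.pi_pos
  have hγ0 : (0:ℝ) < γ := lt_trans one_pos hγ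
  set s : ℝ := Real.sqrt (2 / π) with hs
  set a : ℝ := (γ + γ⁻¹) / 2 with ha
  set b : ℝ := (γ - γ⁻¹) / 2 with hb
  have hb0 : (0:ℝ) < b := by
    have h1 : γ⁻¹ < 1 := inv_lt_one_of_one_lt₀ hγ
    have h2 : γ⁻¹ < γ := lt_trans h1 hγ
    simp only [hb]; linarith
  have hg : ∀ θ, gell γ θ = a + b * Real.cos (2 * θ) := by
    intro θ
    have h1 : Real.cos θ ^ 2 = 1 / 2 + Real.cos (2 * θ) / 2 := Real.cos_sq θ
    have h2 : Real.sin θ ^ 2 = 1 - Real.cos θ ^ 2 := Real.sin_sq θ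
    rw [gell, h2, h1, ha, hb]; ring
  have h4 : ∀ θ : ℝ, Real.cos (4 * θ) = 2 * Real.cos (2 * θ) ^ 2 - 1 := by
    intro θ
    rw [show (4:ℝ) * θ = 2 * (2 * θ) by ring, Real.cos_two_mul]
  have h6 : ∀ θ : ℝ, Real.cos (6 * θ) = 4 * Real.cos (2 * θ) ^ 3 - 3 * Real.cos (2 * θ) := by
    intro θ
    rw [show (6:ℝ) * θ = 3 * (2 * θ) by ring, Real.cos_three_mul]
  have ii : ∀ f : ℝ → ℝ, Continuous f → IntervalIntegrable f volume 0 (2 * π) :=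
    fun f hf => hf.intervalIntegrable _ _
  have hgc : Continuous fun θ => gell γ θ := by unfold gell; fun_prop
  have hI2 : (∫ θ in (0:ℝ)..(2 * π), Real.cos (2 * θ)) = 0 := by
    have := integral_cos_nat_mul 2 (by norm_num); simpa using this
  have hI4 : (∫ θ in (0:ℝ)..(2 * π), Real.cos (4 * θ)) = 0 := by
    have := integral_cos_nat_mul 4 (by norm_num); simpa using this
  have hI6 : (∫ θ in (0:ℝ)..(2 * π), Real.cos (6 * θ)) = 0 := by
    have := integral_cos_nat_mul 6 (by norm_num); simpa using this
  -- first integral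
  have key1 : (∫ θ in (0:ℝ)..(2 * π), (vc * c2fun θ + η θ) * gell γ θ)
      = vc * s * b * π := by
    have heq : Set.EqOn (fun θ => (vc * c2fun θ + η θ) * gell γ θ)
        (fun θ => vc * s * b / 2 + ((vc * s * a) * Real.cos (2 * θ) +
          ((vc * s * b / 2) * Real.cos (4 * θ) + (a * η θ + b * (η θ * Real.cos (2 * θ))))))
        (Set.uIcc 0 (2 * π)) := by
      intro θ _
      simp only [c2fun, hg θ, h4 θ, ← hs]
      ring
    rw [intervalIntegral.integral_congr heq,
      intervalIntegral.integral_add (ii _ (by fun_prop)) (ii _ (by fun_prop)),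
      intervalIntegral.integral_add (ii _ (by fun_prop)) (ii _ (by fun_prop)),
      intervalIntegral.integral_add (ii _ (by fun_prop)) (ii _ (by fun_prop)),
      intervalIntegral.integral_add (ii _ (by fun_prop)) (ii _ (by fun_prop)),
      intervalIntegral.integral_const_mul, intervalIntegral.integral_const_mul,
      intervalIntegral.integral_const_mul, intervalIntegral.integral_const_mul,
      intervalIntegral.integral_const, hI2, hI4, h0, hc2]
    simp only [smul_eq_mul, mul_zero, add_zero, sub_zero]
    ring
  -- second integral
  have key2 : (∫ θ in (0:ℝ)..(2 * π), (vc * c2fun θ + η θ) ^ 2 * gell γ θ)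
      = vc ^ 2 * s ^ 2 * a * π + vc * s * b * (∫ θ in (0:ℝ)..(2 * π), η θ * Real.cos (4 * θ))
        + (∫ θ in (0:ℝ)..(2 * π), (η θ) ^ 2 * gell γ θ) := by
    have heq : Set.EqOn (fun θ => (vc * c2fun θ + η θ) ^ 2 * gell γ θ)
        (fun θ => vc ^ 2 * s ^ 2 * a / 2 +
          (((vc ^ 2 * s ^ 2 * a / 2) * Real.cos (4 * θ) +
            ((vc ^ 2 * s ^ 2 * b * 3 / 4) * Real.cos (2 * θ) +
             (vc ^ 2 * s ^ 2 * b / 4) * Real.cos (6 * θ))) +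
           (((2 * vc * s * a) * (η θ * Real.cos (2 * θ)) +
             ((vc * s * b) * η θ + (vc * s * b) * (η θ * Real.cos (4 * θ)))) +
            (η θ) ^ 2 * gell γ θ)))
        (Set.uIcc 0 (2 * π)) := by
      intro θ _
      simp only [c2fun, hg θ, h4 θ, h6 θ, ← hs]
      ring
    rw [intervalIntegral.integral_congr heq,
      intervalIntegral.integral_add (ii _ (by fun_prop)) (ii _ (by fun_prop)),
      intervalIntegral.integral_add (ii _ (by fun_prop)) (ii _ (by fun_prop)),
      intervalIntegral.integral_add (ii _ (by fun_prop)) (ii _ (by fun_prop)),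
      intervalIntegral.integral_add (ii _ (by fun_prop))
        (ii (fun θ => (η θ) ^ 2 * gell γ θ) (((hcont.pow 2).mul hgc))),
      intervalIntegral.integral_add (ii _ (by fun_prop)) (ii _ (by fun_prop)),
      intervalIntegral.integral_add (ii _ (by fun_prop)) (ii _ (by fun_prop)),
      intervalIntegral.integral_add (ii _ (by fun_prop)) (ii _ (by fun_prop)),
      intervalIntegral.integral_const_mul, intervalIntegral.integral_const_mul,
      intervalIntegral.integral_const_mul, intervalIntegral.integral_const_mul,
      intervalIntegral.integral_const_mul, intervalIntegral.integral_const_mul,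
      intervalIntegral.integral_const, hI2, hI4, hI6, h0, hc2]
    simp only [smul_eq_mul, mul_zero, add_zero, zero_add, sub_zero]
    ring
  -- constants
  have hsπ0 : (0:ℝ) < Real.sqrt π := Real.sqrt_pos.mpr hπ
  have hsπ2 : Real.sqrt π * Real.sqrt π = π := Real.mul_self_sqrt hπ.le
  have hs2' : s * s = 2 / π := Real.mul_self_sqrt (by positivity)
  have e2 : Real.sqrt 2 * Real.sqrt 2 = 2 := Real.mul_self_sqrt (by norm_num)
  have hsval : s = Real.sqrt 2 / Real.sqrt π := by
    rw [hs, Real.sqrt_div (by norm_num : (0:ℝ) ≤ 2)]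
  have haleph : aleph γ = Real.sqrt 2 / (Real.sqrt π * (2 * b)) := by
    rw [aleph, hb]; ring_nf
  have hab : a * (γ ^ 2 - 1) = (γ ^ 2 + 1) * b := by
    rw [ha, hb]; field_simp
  clear_value s a b
  have hAs : aleph γ * s = 1 / (π * b) := by
    rw [haleph, hsval, div_mul_div_comm, e2, mul_right_comm, hsπ2,
      div_eq_div_iff (by positivity) (by positivity)]
    ring
  have c1 : aleph γ * (vc * s * b * π) = vc := by
    rw [show aleph γ * (vc * s * b * π) = (aleph γ * s) * (vc * b * π) by ring, hAs]
    field_simp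
  have c2 : aleph γ * (vc * s * b) = vc * (1 / π) := by
    rw [show aleph γ * (vc * s * b) = (aleph γ * s) * (vc * b) by ring, hAs]
    field_simp
  have hγ2 : (0:ℝ) < γ ^ 2 - 1 := by
    have h1 : (1:ℝ) < γ ^ 2 := one_lt_pow₀ hγ (by norm_num)
    linarith
  have c3 : aleph γ * (vc ^ 2 * s ^ 2 * a * π)
      = (γ ^ 2 + 1) * Real.sqrt 2 / ((γ ^ 2 - 1) * Real.sqrt π) * vc ^ 2 := by
    have hsp : vc ^ 2 * s ^ 2 * a * π = 2 * a * vc ^ 2 := by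
      rw [sq s, hs2']; field_simp
    rw [hsp, haleph, div_mul_eq_mul_div, div_mul_eq_mul_div,
      div_eq_div_iff (by positivity) (by positivity)]
    linear_combination (2 * Real.sqrt 2 * Real.sqrt π * vc ^ 2) * hab
  simp only [Jcal]
  rw [key1, key2]
  linear_combination c1 + (∫ θ in (0:ℝ)..(2 * π), η θ * Real.cos (4 * θ)) * c2 + c3
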